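/- Let ω be an infinite reduced word on S with inversion set N(ω) = ⋃_i N(w_i), and let w ∈ W. Then w is a prefix of ω (i.e., w ≤ w_j in the weak order for some prefix w_j of ω) if and only if N(w) ⊆ N(ω). -/

import Mathlib

open Pointwise

noncomputable section

/-- The set of nonnegative linear combinations of elements of `X`. -/
def coneOf {V : Type*} [AddCommGroup V] [Module ℝ V] (X : Set V) : Set V :=
  {v | ∃ (n : ℕ) (c : Fin n → ℝ) (f : Fin n → V),
    (∀ i, 0 ≤ c i) ∧ (∀ i, f i ∈ X) ∧ ∑ i, c i • f i = v}

/-- A geometric representation of the Coxeter system `cs` on the real quadratic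
space `(V, bil)`: each simple generator acts as the `bil`-reflection in its simple
root, and the simple roots form a simple system. -/
structure GeomRep {B : Type*} [Fintype B] {W : Type*} [Group W]
    (M : CoxeterMatrix B) (cs : CoxeterSystem M W)
    (V : Type*) [AddCommGroup V] [Module ℝ V] where
  /-- the symmetric bilinear form -/
  bil : LinearMap.BilinForm ℝ V
  bil_symm : ∀ u v : V, bil u v = bil v u
  /-- the representation of `W` by linear automorphisms of `V` -/
  π : W →* (V ≃ₗ[ℝ] V)
  /-- the simple roots -/
  α : B → V
  norm_one : ∀ i, bil (α i) (α i) = 1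
  simple_refl : ∀ i v, π (cs.simple i) v = v - (2 * bil (α i) v) • α i
  pos_indep : ∀ c : B → ℝ, (∀ i, 0 ≤ c i) → ∑ i, c i • α i = 0 → ∀ i, c i = 0
  angle_finite : ∀ i j, i ≠ j → M.M i j ≠ 0 →
    bil (α i) (α j) = - Real.cos (Real.pi / (M.M i j : ℝ))
  angle_infinite : ∀ i j, i ≠ j → M.M i j = 0 → bil (α i) (α j) ≤ -1

namespace GeomRep

variable {B : Type*} [Fintype B] {W : Type*} [Group W]
  {M : CoxeterMatrix B} {cs : CoxeterSystem M W}
  {V : Type*} [AddCommGroup V] [Module ℝ V]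

/-- The root system `Φ = W(Δ)`. -/
def Phi (G : GeomRep M cs V) : Set V := {v | ∃ (w : W) (i : B), G.π w (G.α i) = v}

/-- The positive roots `Φ⁺ = cone(Δ) ∩ Φ`. -/
def PhiPos (G : GeomRep M cs V) : Set V := G.Phi ∩ coneOf (Set.range G.α)

/-- The (left) inversion set `N(w) = Φ⁺ ∩ w(Φ⁻)`. -/
def N (G : GeomRep M cs V) (w : W) : Set V := G.PhiPos ∩ (G.π w '' (-G.PhiPos))

/-- `A ⊆ Φ⁺` is closed if for all `α, β ∈ A`, every root in `cone(α,β)` lies in `A`. -/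
def IsClosedSet (G : GeomRep M cs V) (A : Set V) : Prop :=
  ∀ a ∈ A, ∀ b ∈ A, coneOf {a, b} ∩ G.Phi ⊆ A

/-- `A` is biclosed if `A` and `Φ⁺ \ A` are both closed. -/
def IsBiclosed (G : GeomRep M cs V) (A : Set V) : Prop :=
  G.IsClosedSet A ∧ G.IsClosedSet (G.PhiPos \ A)

/-- `A` is convex if `A = cone(A) ∩ Φ`. -/
def IsConvexSet (G : GeomRep M cs V) (A : Set V) : Prop :=
  A = coneOf A ∩ G.Phi

/-- `A` is biconvex if `A` and `Φ⁺ \ A` are both convex. -/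
def IsBiconvex (G : GeomRep M cs V) (A : Set V) : Prop :=
  G.IsConvexSet A ∧ G.IsConvexSet (G.PhiPos \ A)

/-- `A ⊆ Φ⁺` is separable if `cone(A) ∩ cone(Φ⁺ \ A) = {0}`. -/
def IsSeparable (G : GeomRep M cs V) (A : Set V) : Prop :=
  coneOf A ∩ coneOf (G.PhiPos \ A) = {0}


open CoxeterSystem Finset

variable {B : Type*} [Fintype B] {W : Type*} [Group W]
  {M : CoxeterMatrix B} {cs : CoxeterSystem M W}
  {V : Type*} [AddCommGroup V] [Module ℝ V] (G : GeomRep M cs V)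

local prefix:100 "ℓ" => cs.length
local prefix:100 "σ" => cs.simple

/-- The fundamental cone. -/
def cone (G : GeomRep M cs V) : Set V := coneOf (Set.range G.α)

lemma mem_cone_iff {v : V} :
    v ∈ G.cone ↔ ∃ d : B → ℝ, (∀ b, 0 ≤ d b) ∧ ∑ b, d b • G.α b = v := by
  classical
  constructor
  · rintro ⟨n, c, f, hc, hf, rfl⟩
    choose g hg using hf
    refine ⟨fun b => ∑ t ∈ univ.filter (g · = b), c t, fun b => sum_nonneg fun t _ => hc t, ?_⟩
    rw [← Finset.sum_fiberwise univ g (fun t => c t • f t)]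
    refine Finset.sum_congr rfl fun b _ => ?_
    rw [Finset.sum_smul]
    refine Finset.sum_congr rfl fun t ht => ?_
    rw [Finset.mem_filter] at ht
    rw [← hg t, ht.2]
  · rintro ⟨d, hd, rfl⟩
    refine ⟨Fintype.card B, fun t => d ((Fintype.equivFin B).symm t),
      fun t => G.α ((Fintype.equivFin B).symm t), fun t => hd _,
      fun t => Set.mem_range_self _, ?_⟩
    exact Fintype.sum_equiv (Fintype.equivFin B).symm _ _ (fun t => rfl)

lemma alpha_mem_cone (i : B) : G.α i ∈ G.cone :=
  ⟨1, fun _ => 1, fun _ => G.α i, fun _ => zero_le_one, fun _ => Set.mem_range_self i, by simp⟩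

lemma add_mem_cone {v w : V} (hv : v ∈ G.cone) (hw : w ∈ G.cone) : v + w ∈ G.cone := by
  rw [mem_cone_iff] at hv hw ⊢
  obtain ⟨d, hd, rfl⟩ := hv
  obtain ⟨e, he, rfl⟩ := hw
  exact ⟨d + e, fun b => add_nonneg (hd b) (he b), by simp [add_smul, Finset.sum_add_distrib]⟩

lemma smul_mem_cone {c : ℝ} (hc : 0 ≤ c) {v : V} (hv : v ∈ G.cone) : c • v ∈ G.cone := by
  rw [mem_cone_iff] at hv ⊢
  obtain ⟨d, hd, rfl⟩ := hv
  exact ⟨fun b => c * d b, fun b => mul_nonneg hc (hd b), by simp [mul_smul, Finset.smul_sum]⟩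

lemma pair_mem_cone {a b : ℝ} (ha : 0 ≤ a) (hb : 0 ≤ b) (i j : B) :
    a • G.α i + b • G.α j ∈ G.cone :=
  G.add_mem_cone (G.smul_mem_cone ha (G.alpha_mem_cone i))
    (G.smul_mem_cone hb (G.alpha_mem_cone j))

lemma eq_zero_of_mem_cone_of_neg_mem_cone {v : V} (hv : v ∈ G.cone) (hv' : -v ∈ G.cone) :
    v = 0 := by
  rw [mem_cone_iff] at hv hv'
  obtain ⟨d, hd, rfl⟩ := hv
  obtain ⟨e, he, hev⟩ := hv'
  have hsum : ∑ b, (d b + e b) • G.α b = 0 := by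
    simp only [add_smul, Finset.sum_add_distrib, hev]
    abel
  have h0 := G.pos_indep (fun b => d b + e b) (fun b => add_nonneg (hd b) (he b)) hsum
  have : ∀ b, d b = 0 := fun b => le_antisymm (by have h : d b + e b = 0 := h0 b; linarith [he b]) (hd b)
  simp [this]


lemma pi_mul_apply (u w : W) (v : V) : G.π (u * w) v = G.π u (G.π w v) := by
  rw [map_mul]; rfl

lemma pi_inv_apply (w : W) (v : V) : G.π w⁻¹ (G.π w v) = v := by
  rw [← G.pi_mul_apply, inv_mul_cancel, map_one]; rfl

lemma pi_apply_inv (w : W) (v : V) : G.π w (G.π w⁻¹ v) = v := by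
  rw [← G.pi_mul_apply, mul_inv_cancel, map_one]; rfl

lemma pi_injective (w : W) : Function.Injective (G.π w) := (G.π w).injective

lemma bil_invariant (w : W) (u v : V) : G.bil (G.π w u) (G.π w v) = G.bil u v := by
  revert u v
  induction w using CoxeterSystem.simple_induction cs with
  | simple i =>
      intro u v
      simp only [G.simple_refl]
      simp only [map_sub, map_smul, LinearMap.sub_apply, LinearMap.smul_apply, smul_eq_mul]
      rw [G.norm_one i, G.bil_symm (G.α i) v, G.bil_symm u (G.α i)]
      ring
  | one => intro u v; simp only [map_one]; rfl
  | mul w w' hw hw' =>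
      intro u v
      rw [G.pi_mul_apply, G.pi_mul_apply, hw, hw']
lemma alpha_mem_Phi (i : B) : G.α i ∈ G.Phi := ⟨1, i, by rw [map_one]; rfl⟩

lemma pi_mem_Phi (w : W) {v : V} (hv : v ∈ G.Phi) : G.π w v ∈ G.Phi := by
  obtain ⟨u, i, rfl⟩ := hv
  exact ⟨w * u, i, by rw [G.pi_mul_apply]⟩

lemma root_norm_one {v : V} (hv : v ∈ G.Phi) : G.bil v v = 1 := by
  obtain ⟨u, i, rfl⟩ := hv
  rw [G.bil_invariant, G.norm_one]

lemma zero_not_mem_Phi : (0 : V) ∉ G.Phi := by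
  intro h
  have := G.root_norm_one h
  simp at this

lemma root_ne_zero {v : V} (hv : v ∈ G.Phi) : v ≠ 0 := fun h => G.zero_not_mem_Phi (h ▸ hv)

lemma pi_simple_self (i : B) : G.π (σ i) (G.α i) = -G.α i := by
  rw [G.simple_refl, G.norm_one]
  module

lemma neg_mem_Phi {v : V} (hv : v ∈ G.Phi) : -v ∈ G.Phi := by
  obtain ⟨u, i, rfl⟩ := hv
  refine ⟨u * σ i, i, ?_⟩
  rw [G.pi_mul_apply, G.pi_simple_self, map_neg]

lemma two_le_M {i j : B} (hij : i ≠ j) (hM : M.M i j ≠ 0) : 2 ≤ M.M i j := by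
  have := M.off_diagonal i j hij
  omega

lemma bil_alpha_nonpos {i j : B} (hij : i ≠ j) : G.bil (G.α i) (G.α j) ≤ 0 := by
  rcases eq_or_ne (M.M i j) 0 with h | h
  · linarith [G.angle_infinite i j hij h]
  · rw [G.angle_finite i j hij h]
    have h2' : 2 ≤ M.M i j := by have := M.off_diagonal i j hij; omega
    have h2 : (2 : ℝ) ≤ (M.M i j : ℝ) := by exact_mod_cast h2'
    have : 0 ≤ Real.cos (Real.pi / (M.M i j : ℝ)) := by
      apply Real.cos_nonneg_of_mem_Icc
      have hpos : 0 ≤ Real.pi / (M.M i j : ℝ) := by positivity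
      constructor
      · linarith [Real.pi_pos]
      · rw [div_le_iff₀ (by linarith)]
        nlinarith [Real.pi_pos]
    linarith

/-- Reflection formula on a combination of two simple roots. -/
lemma pi_simple_pair (i j : B) (a b : ℝ) :
    G.π (σ i) (a • G.α i + b • G.α j) =
      (-a - 2 * G.bil (G.α i) (G.α j) * b) • G.α i + b • G.α j := by
  rw [G.simple_refl]
  simp only [map_add, map_smul, smul_eq_mul, G.norm_one]
  module
lemma pi_simple_pair' (i j : B) (a b : ℝ) :
    G.π (σ j) (a • G.α i + b • G.α j) =
      a • G.α i + (-b - 2 * G.bil (G.α i) (G.α j) * a) • G.α j := by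
  rw [add_comm (a • G.α i), G.pi_simple_pair j i b a, G.bil_symm (G.α j) (G.α i), add_comm]

lemma pi_alt_succ (i j : B) (k : ℕ) (v : V) :
    G.π (cs.wordProd (alternatingWord i j (k + 1))) v =
      G.π (σ (if Even k then j else i)) (G.π (cs.wordProd (alternatingWord i j k)) v) := by
  rw [alternatingWord_succ', wordProd_cons, G.pi_mul_apply]

lemma pi_alt_zero (i j : B) (v : V) :
    G.π (cs.wordProd (alternatingWord i j 0)) v = v := by
  show G.π (cs.wordProd []) v = v
  rw [wordProd_nil, map_one]; rfl

private lemma sin_rec (θ t : ℝ) :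
    Real.sin (t + θ + θ) = 2 * Real.cos θ * Real.sin (t + θ) - Real.sin t := by
  have h1 := Real.sin_add (t + θ) θ
  have h2 : Real.sin t = Real.sin (t + θ) * Real.cos θ - Real.cos (t + θ) * Real.sin θ := by
    have := Real.sin_sub (t + θ) θ
    simpa using this
  linarith

/-- Rank 2 computation, finite case. -/
lemma rank2_formula_finite (i j : B) (hij : i ≠ j) (hM : M.M i j ≠ 0) (k : ℕ) :
    G.π (cs.wordProd (alternatingWord i j k)) (G.α i) =
      ((if Even k then Real.sin (((k : ℝ) + 1) * (Real.pi / (M.M i j : ℝ)))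
          else Real.sin ((k : ℝ) * (Real.pi / (M.M i j : ℝ)))) /
            Real.sin (Real.pi / (M.M i j : ℝ))) • G.α i +
      ((if Even k then Real.sin ((k : ℝ) * (Real.pi / (M.M i j : ℝ)))
          else Real.sin (((k : ℝ) + 1) * (Real.pi / (M.M i j : ℝ)))) /
            Real.sin (Real.pi / (M.M i j : ℝ))) • G.α j := by
  have h2' : 2 ≤ M.M i j := by have := M.off_diagonal i j hij; omega
  have hm2 : (2 : ℝ) ≤ (M.M i j : ℝ) := by exact_mod_cast h2'
  set θ : ℝ := Real.pi / (M.M i j : ℝ) with hθ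
  have hθpos : 0 < θ := by have := Real.pi_pos; positivity
  have hθlt : θ < Real.pi := by
    rw [hθ, div_lt_iff₀ (by linarith)]
    nlinarith [Real.pi_pos]
  have hsin : 0 < Real.sin θ := Real.sin_pos_of_pos_of_lt_pi hθpos hθlt
  have hc : G.bil (G.α i) (G.α j) = -Real.cos θ := G.angle_finite i j hij hM
  induction k with
  | zero =>
      simp only [Nat.cast_zero, Even.zero, if_true, zero_add, one_mul, zero_mul, Real.sin_zero]
      rw [G.pi_alt_zero, div_self (ne_of_gt hsin)]
      simp
  | succ k ih =>
      have hrec : Real.sin (((k : ℝ) + 1 + 1) * θ) =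
          2 * Real.cos θ * Real.sin (((k : ℝ) + 1) * θ) - Real.sin ((k : ℝ) * θ) := by
        have := sin_rec θ ((k : ℝ) * θ)
        rw [show (k : ℝ) * θ + θ + θ = ((k : ℝ) + 1 + 1) * θ by ring,
          show (k : ℝ) * θ + θ = ((k : ℝ) + 1) * θ by ring] at this
        exact this
      rw [G.pi_alt_succ]
      rcases Nat.even_or_odd k with hk | hk
      · have hk1 : ¬ Even (k + 1) := by simp [Nat.even_add_one, hk]
        simp only [hk, if_true, hk1, if_false] at ih ⊢
        rw [ih, G.pi_simple_pair', hc]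
        push_cast
        have e2 : -(Real.sin ((k : ℝ) * θ) / Real.sin θ) -
            2 * -Real.cos θ * (Real.sin (((k : ℝ) + 1) * θ) / Real.sin θ) =
            Real.sin (((k : ℝ) + 1 + 1) * θ) / Real.sin θ := by
          rw [hrec]; field_simp; ring
        rw [e2]
      · have hk' : ¬ Even k := Nat.not_even_iff_odd.mpr hk
        have hk1 : Even (k + 1) := by simpa [Nat.even_add_one] using hk'
        simp only [hk', if_false, hk1, if_true] at ih ⊢
        rw [ih, G.pi_simple_pair, hc]
        push_cast
        have e2 : -(Real.sin ((k : ℝ) * θ) / Real.sin θ) -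
            2 * -Real.cos θ * (Real.sin (((k : ℝ) + 1) * θ) / Real.sin θ) =
            Real.sin (((k : ℝ) + 1 + 1) * θ) / Real.sin θ := by
          rw [hrec]; field_simp; ring
        rw [e2]

/-- Rank 2 positivity. -/
lemma rank2 (i j : B) (hij : i ≠ j) (k : ℕ) (hk : M.M i j = 0 ∨ k < M.M i j) :
    ∃ a b : ℝ, 0 ≤ a ∧ 0 ≤ b ∧
      G.π (cs.wordProd (alternatingWord i j k)) (G.α i) = a • G.α i + b • G.α j := by
  rcases hk with hM | hk
  · -- infinite case
    have hc : G.bil (G.α i) (G.α j) ≤ -1 := G.angle_infinite i j hij hM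
    set c := G.bil (G.α i) (G.α j) with hcdef
    have key : ∀ k : ℕ, ∃ a b : ℝ, 0 ≤ a ∧ 0 ≤ b ∧
        (if Even k then b ≤ a else a ≤ b) ∧
        G.π (cs.wordProd (alternatingWord i j k)) (G.α i) = a • G.α i + b • G.α j := by
      intro k
      induction k with
      | zero =>
          refine ⟨1, 0, zero_le_one, le_refl 0, by simp, ?_⟩
          rw [G.pi_alt_zero]; simp
      | succ k ih =>
          obtain ⟨a, b, ha, hb, hab, hx⟩ := ih
          rw [G.pi_alt_succ]
          rcases Nat.even_or_odd k with hk | hk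
          · have hk1 : ¬ Even (k + 1) := by simp [Nat.even_add_one, hk]
            rw [if_pos hk] at hab ⊢
            refine ⟨a, -b - 2 * c * a, ha, ?_, ?_, ?_⟩
            · nlinarith
            · rw [if_neg hk1]; nlinarith
            · rw [hx, G.pi_simple_pair']
          · have hk' : ¬ Even k := Nat.not_even_iff_odd.mpr hk
            have hk1 : Even (k + 1) := by simpa [Nat.even_add_one] using hk'
            rw [if_neg hk'] at hab ⊢
            refine ⟨-a - 2 * c * b, b, ?_, hb, ?_, ?_⟩
            · nlinarith
            · rw [if_pos hk1]; nlinarith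
            · rw [hx, G.pi_simple_pair]
    obtain ⟨a, b, ha, hb, _, hx⟩ := key k
    exact ⟨a, b, ha, hb, hx⟩
  · -- finite case
    have hM : M.M i j ≠ 0 := by omega
    have h2' : 2 ≤ M.M i j := by have := M.off_diagonal i j hij; omega
    have hm2 : (2 : ℝ) ≤ (M.M i j : ℝ) := by exact_mod_cast h2'
    set θ : ℝ := Real.pi / (M.M i j : ℝ) with hθ
    have hθpos : 0 < θ := by have := Real.pi_pos; positivity
    have hθlt : θ < Real.pi := by
      rw [hθ, div_lt_iff₀ (by linarith)]
      nlinarith [Real.pi_pos]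
    have hsin : 0 < Real.sin θ := Real.sin_pos_of_pos_of_lt_pi hθpos hθlt
    have hk1m : ((k : ℝ) + 1) * θ ≤ Real.pi := by
      have hkm : (k : ℝ) + 1 ≤ (M.M i j : ℝ) := by exact_mod_cast hk
      calc ((k : ℝ) + 1) * θ ≤ (M.M i j : ℝ) * θ := by nlinarith
        _ = Real.pi := by rw [hθ]; field_simp
    have hk0 : (0 : ℝ) ≤ (k : ℝ) * θ := by positivity
    have hkm' : (k : ℝ) * θ ≤ Real.pi := by nlinarith
    have s1 : 0 ≤ Real.sin ((k : ℝ) * θ) := Real.sin_nonneg_of_nonneg_of_le_pi hk0 hkm'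
    have s2 : 0 ≤ Real.sin (((k : ℝ) + 1) * θ) :=
      Real.sin_nonneg_of_nonneg_of_le_pi (by positivity) hk1m
    refine ⟨_, _, ?_, ?_, G.rank2_formula_finite i j hij hM k⟩
    · apply div_nonneg _ (le_of_lt hsin)
      split <;> assumption
    · apply div_nonneg _ (le_of_lt hsin)
      split <;> assumption
lemma strip : ∀ n : ℕ, ∀ w : W, ℓ w ≤ n → ∀ i j : B, i ≠ j →
    ¬cs.IsRightDescent w i → cs.IsRightDescent w j →
    ∃ (u : W) (k : ℕ), 1 ≤ k ∧ w = u * cs.wordProd (alternatingWord i j k) ∧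
      ℓ w = ℓ u + k ∧ ¬cs.IsRightDescent u i ∧ ¬cs.IsRightDescent u j ∧
      (M.M i j = 0 ∨ k < M.M i j) := by
  intro n
  induction n with
  | zero =>
      intro w hw i j _ _ hj
      have : w = 1 := cs.length_eq_zero_iff.mp (Nat.le_antisymm hw (Nat.zero_le _))
      exact absurd hj (this ▸ cs.not_isRightDescent_one j)
  | succ n ih =>
      intro w hw i j hij hi hj
      set w' := w * σ j with hw'def
      have hlen : ℓ w' + 1 = ℓ w := cs.isRightDescent_iff.mp hj
      have hw'w : w' * σ j = w := by
        rw [hw'def, cs.simple_mul_simple_cancel_right]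
      have hw'j : ¬cs.IsRightDescent w' j := by
        rw [CoxeterSystem.not_isRightDescent_iff, hw'w]
        omega
      by_cases hw'i : cs.IsRightDescent w' i
      · obtain ⟨u, k', hk1, hdecomp, hlen', huj, hui, hbound⟩ :=
          ih w' (by omega) j i hij.symm hw'j hw'i
        have hdec : w = u * cs.wordProd (alternatingWord i j (k' + 1)) := by
          rw [← hw'w, hdecomp, alternatingWord_succ, cs.wordProd_concat, mul_assoc]
        have hlw : ℓ w = ℓ u + (k' + 1) := by omega
        refine ⟨u, k' + 1, by omega, hdec, hlw, hui, huj, ?_⟩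
        rcases hbound with hM0 | hklt
        · left; rw [M.symmetric] at hM0; exact hM0
        · rw [M.symmetric j i] at hklt
          rcases Nat.lt_or_ge (k' + 1) (M.M i j) with h | h
          · right; exact h
          · exfalso
            have hkm : k' + 1 = M.M i j := by omega
            have hM0 : M.M i j ≠ 0 := by omega
            -- w = u * π(alt i j m) = u * π(alt j i m), and alt j i m = (alt i j (m-1)).concat i
            have hbraid : cs.wordProd (alternatingWord i j (M.M i j)) =
                cs.wordProd (alternatingWord j i (M.M i j)) := by
              have := cs.wordProd_braidWord_eq i j
              unfold CoxeterSystem.braidWord at this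
              rw [M.symmetric j i] at this
              exact this
            have hm1 : M.M i j - 1 + 1 = M.M i j := by omega
            have halt : cs.wordProd (alternatingWord j i (M.M i j)) =
                cs.wordProd (alternatingWord i j (M.M i j - 1)) * σ i := by
              conv_lhs => rw [← hm1]
              rw [alternatingWord_succ, cs.wordProd_concat]
            have hwsi : w * σ i = u * cs.wordProd (alternatingWord i j (M.M i j - 1)) := by
              rw [hdec, hkm, hbraid, halt, mul_assoc, mul_assoc,
                cs.simple_mul_simple_self, mul_one]
            have : ℓ (w * σ i) < ℓ w := by
              have h1 : ℓ (u * cs.wordProd (alternatingWord i j (M.M i j - 1))) ≤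
                  ℓ u + (M.M i j - 1) := by
                calc ℓ (u * cs.wordProd (alternatingWord i j (M.M i j - 1)))
                    ≤ ℓ u + ℓ (cs.wordProd (alternatingWord i j (M.M i j - 1))) :=
                      cs.length_mul_le _ _
                  _ ≤ ℓ u + (alternatingWord i j (M.M i j - 1)).length := by
                      have := cs.length_wordProd_le (alternatingWord i j (M.M i j - 1))
                      omega
                  _ = ℓ u + (M.M i j - 1) := by rw [CoxeterSystem.length_alternatingWord]
              rw [hwsi]
              omega
            exact hi this
      · refine ⟨w', 1, le_refl 1, ?_, by omega, hw'i, hw'j, ?_⟩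
        · have h1 : alternatingWord i j 1 = [j] := rfl
          rw [h1, cs.wordProd_singleton, hw'w]
        · have := M.off_diagonal i j hij
          omega

theorem pos_of_not_isRightDescent' : ∀ n : ℕ, ∀ w : W, ℓ w ≤ n → ∀ i : B,
    ¬cs.IsRightDescent w i → G.π w (G.α i) ∈ G.cone := by
  intro n
  induction n with
  | zero =>
      intro w hw i _
      have hw1 : w = 1 := cs.length_eq_zero_iff.mp (Nat.le_antisymm hw (Nat.zero_le _))
      rw [hw1, map_one]
      exact G.alpha_mem_cone i
  | succ n ih =>
      intro w hw i hi
      by_cases hw1 : w = 1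
      · rw [hw1, map_one]; exact G.alpha_mem_cone i
      · obtain ⟨j, hj⟩ := cs.exists_rightDescent_of_ne_one hw1
        have hij : i ≠ j := by rintro rfl; exact hi hj
        obtain ⟨u, k, hk1, hdec, hlen, hui, huj, hbound⟩ :=
          strip (cs := cs) (ℓ w) w le_rfl i j hij hi hj
        obtain ⟨a, b, ha, hb, hx⟩ := G.rank2 i j hij k hbound
        rw [hdec, G.pi_mul_apply, hx, map_add, map_smul, map_smul]
        have hu : ℓ u ≤ n := by omega
        exact G.add_mem_cone (G.smul_mem_cone ha (ih u hu i hui))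
          (G.smul_mem_cone hb (ih u hu j huj))

lemma pos_of_not_isRightDescent {w : W} {i : B} (h : ¬cs.IsRightDescent w i) :
    G.π w (G.α i) ∈ G.cone :=
  G.pos_of_not_isRightDescent' (ℓ w) w le_rfl i h

lemma neg_of_isRightDescent {w : W} {i : B} (h : cs.IsRightDescent w i) :
    -(G.π w (G.α i)) ∈ G.cone := by
  have h' : ¬cs.IsRightDescent (w * σ i) i :=
    cs.isRightDescent_iff_not_isRightDescent_mul.mp h
  have hpos := G.pos_of_not_isRightDescent h'
  have heq : G.π (w * σ i) (G.α i) = -(G.π w (G.α i)) := by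
    rw [G.pi_mul_apply, G.pi_simple_self, map_neg]
  rw [heq] at hpos
  exact hpos

lemma not_isRightDescent_iff_pos {w : W} {i : B} :
    ¬cs.IsRightDescent w i ↔ G.π w (G.α i) ∈ G.cone := by
  constructor
  · exact fun h => G.pos_of_not_isRightDescent h
  · intro h hd
    have := G.eq_zero_of_mem_cone_of_neg_mem_cone h (G.neg_of_isRightDescent hd)
    exact G.root_ne_zero (G.pi_mem_Phi w (G.alpha_mem_Phi i)) this

lemma isRightDescent_iff_neg {w : W} {i : B} :
    cs.IsRightDescent w i ↔ -(G.π w (G.α i)) ∈ G.cone := by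
  constructor
  · exact fun h => G.neg_of_isRightDescent h
  · intro h
    by_contra hd
    have := G.eq_zero_of_mem_cone_of_neg_mem_cone (G.not_isRightDescent_iff_pos.mp hd) h
    exact G.root_ne_zero (G.pi_mem_Phi w (G.alpha_mem_Phi i)) this

lemma mem_N_iff {w : W} {v : V} :
    v ∈ G.N w ↔ v ∈ G.Phi ∧ v ∈ G.cone ∧ -(G.π w⁻¹ v) ∈ G.cone := by
  constructor
  · rintro ⟨hpos, x, hx, rfl⟩
    obtain ⟨hΦ, hc⟩ := hpos
    rw [Set.mem_neg] at hx
    obtain ⟨hΦ', hc'⟩ := hx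
    refine ⟨hΦ, hc, ?_⟩
    rw [G.pi_inv_apply]
    exact hc'
  · rintro ⟨hΦ, hc, hnc⟩
    refine ⟨⟨hΦ, hc⟩, G.π w⁻¹ v, ?_, G.pi_apply_inv w v⟩
    rw [Set.mem_neg]
    exact ⟨G.neg_mem_Phi (G.pi_mem_Phi w⁻¹ hΦ), hnc⟩

lemma N_one : G.N (1 : W) = ∅ := by
  ext v
  simp only [Set.mem_empty_iff_false, iff_false]
  rw [G.mem_N_iff]
  rintro ⟨hΦ, hc, hnc⟩
  rw [inv_one, map_one] at hnc
  exact G.root_ne_zero hΦ (G.eq_zero_of_mem_cone_of_neg_mem_cone hc hnc)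
lemma pi_simple_invol (i : B) (v : V) : G.π (σ i) (G.π (σ i) v) = v := by
  rw [← G.pi_mul_apply, cs.simple_mul_simple_self, map_one]; rfl

lemma root_pos_or_neg {v : V} (hv : v ∈ G.Phi) : v ∈ G.cone ∨ -v ∈ G.cone := by
  obtain ⟨w, i, rfl⟩ := hv
  by_cases h : cs.IsRightDescent w i
  · right; exact G.neg_of_isRightDescent h
  · left; exact G.pos_of_not_isRightDescent h

lemma alpha_ne_zero (i : B) : G.α i ≠ 0 := G.root_ne_zero (G.alpha_mem_Phi i)

/-- If `β` is a positive root other than `α i`, then `s i β` is positive. -/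
lemma simple_fixes_pos {i : B} {v : V} (hΦ : v ∈ G.Phi) (hc : v ∈ G.cone)
    (hne : v ≠ G.α i) : G.π (σ i) v ∈ G.cone := by
  classical
  rcases G.root_pos_or_neg (G.pi_mem_Phi (σ i) hΦ) with h | h
  · exact h
  · exfalso
    set t : ℝ := 2 * G.bil (G.α i) v with ht
    have hrefl : G.π (σ i) v = v - t • G.α i := by rw [G.simple_refl]
    have hsum0 : v + -(G.π (σ i) v) = t • G.α i := by rw [hrefl]; abel
    obtain ⟨d, hd, hdv⟩ := G.mem_cone_iff.mp hc
    obtain ⟨e, he, hev⟩ := G.mem_cone_iff.mp h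
    have hsum : ∑ b, (d b + e b) • G.α b = t • G.α i := by
      simp only [add_smul, Finset.sum_add_distrib, hdv, hev]
      exact hsum0
    -- t ≤ d i + e i  via bil with α i
    have hti : t ≤ d i + e i := by
      have h1 : G.bil (G.α i) (t • G.α i) = t := by
        rw [map_smul, smul_eq_mul, G.norm_one, mul_one]
      have h2 : G.bil (G.α i) (∑ b, (d b + e b) • G.α b) =
          ∑ b, (d b + e b) * G.bil (G.α i) (G.α b) := by
        rw [map_sum]
        exact Finset.sum_congr rfl fun b _ => by rw [map_smul, smul_eq_mul]
      rw [hsum] at h2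
      rw [h1] at h2
      have h3 : ∑ b ∈ Finset.univ.erase i, (d b + e b) * G.bil (G.α i) (G.α b) ≤ 0 := by
        apply Finset.sum_nonpos
        intro b hb
        have hbi : b ≠ i := (Finset.mem_erase.mp hb).1
        exact mul_nonpos_of_nonneg_of_nonpos (add_nonneg (hd b) (he b))
          (G.bil_alpha_nonpos (Ne.symm hbi))
      have h4 : (d i + e i) * G.bil (G.α i) (G.α i) +
          ∑ b ∈ Finset.univ.erase i, (d b + e b) * G.bil (G.α i) (G.α b) =
          ∑ b, (d b + e b) * G.bil (G.α i) (G.α b) :=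
        Finset.add_sum_erase Finset.univ (fun b => (d b + e b) * G.bil (G.α i) (G.α b))
          (Finset.mem_univ i)
      rw [G.norm_one, mul_one] at h4
      linarith [h2, h3, h4.symm]
    -- the function g
    set g : B → ℝ := fun b => d b + e b - (if b = i then t else 0) with hg
    have hgnn : ∀ b, 0 ≤ g b := by
      intro b
      by_cases hb : b = i
      · subst hb
        show 0 ≤ d b + e b - ite (b = b) t 0
        rw [if_pos rfl]; linarith
      · show 0 ≤ d b + e b - ite (b = i) t 0
        rw [if_neg hb]; linarith [hd b, he b]
    have hgsum : ∑ b, g b • G.α b = 0 := by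
      simp only [hg, sub_smul, Finset.sum_sub_distrib, hsum]
      have : ∑ b, (if b = i then t else 0) • G.α b = t • G.α i := by
        have hterm : ∀ b : B, (if b = i then t else 0) • G.α b =
            if b = i then t • G.α b else (0 : V) := by
          intro b; split <;> simp
        rw [Finset.sum_congr rfl fun b _ => hterm b,
          Finset.sum_ite_eq' Finset.univ i (fun b => t • G.α b)]
        simp
      rw [this]
      abel
    have hg0 := G.pos_indep g hgnn hgsum
    have hdz : ∀ b, b ≠ i → d b = 0 := by
      intro b hb
      have := hg0 b
      simp only [hg, if_neg hb] at this
      linarith [hd b, he b]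
    have hvdi : v = d i • G.α i := by
      rw [← hdv]
      rw [Finset.sum_eq_single i]
      · intro b _ hb
        rw [hdz b hb, zero_smul]
      · intro h; exact absurd (Finset.mem_univ i) h
    have hnorm : d i * d i = 1 := by
      have := G.root_norm_one hΦ
      rw [hvdi] at this
      simp only [map_smul, LinearMap.smul_apply, smul_eq_mul, G.norm_one, mul_one] at this
      exact this
    have hdi1 : d i = 1 := by nlinarith [hd i]
    rw [hdi1, one_smul] at hvdi
    exact hne hvdi

lemma N_simple_mul {i : B} {u : W} (h : ¬cs.IsLeftDescent u i) :
    G.N (σ i * u) = insert (G.α i) (G.π (σ i) '' G.N u) := by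
  have hd' : ¬cs.IsRightDescent u⁻¹ i := fun hh => h (cs.isRightDescent_inv_iff.mp hh)
  have hpos : G.π u⁻¹ (G.α i) ∈ G.cone := G.pos_of_not_isRightDescent hd'
  have hinv : ∀ v : V, G.π (σ i * u)⁻¹ v = G.π u⁻¹ (G.π (σ i) v) := by
    intro v
    rw [mul_inv_rev, cs.inv_simple, G.pi_mul_apply]
  ext v
  rw [G.mem_N_iff, Set.mem_insert_iff]
  constructor
  · rintro ⟨hΦ, hc, hnc⟩
    by_cases hvα : v = G.α i
    · exact Or.inl hvα
    · right
      refine ⟨G.π (σ i) v, ?_, G.pi_simple_invol i v⟩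
      rw [G.mem_N_iff]
      refine ⟨G.pi_mem_Phi _ hΦ, G.simple_fixes_pos hΦ hc hvα, ?_⟩
      rw [← hinv]
      exact hnc
  · rintro (rfl | ⟨γ, hγ, rfl⟩)
    · refine ⟨G.alpha_mem_Phi i, G.alpha_mem_cone i, ?_⟩
      rw [hinv, G.pi_simple_self, map_neg, neg_neg]
      exact hpos
    · rw [G.mem_N_iff] at hγ
      obtain ⟨hΦ, hc, hnc⟩ := hγ
      have hγα : γ ≠ G.α i := by
        rintro rfl
        exact G.root_ne_zero (G.pi_mem_Phi u⁻¹ (G.alpha_mem_Phi i))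
          (G.eq_zero_of_mem_cone_of_neg_mem_cone hpos hnc)
      refine ⟨G.pi_mem_Phi _ hΦ, G.simple_fixes_pos hΦ hc hγα, ?_⟩
      rw [hinv, G.pi_simple_invol]
      exact hnc

lemma N_finite (w : W) : (G.N w).Finite := by
  suffices h : ∀ n : ℕ, ∀ w : W, ℓ w ≤ n → (G.N w).Finite from h (ℓ w) w le_rfl
  intro n
  induction n with
  | zero =>
      intro w hw
      have hw1 : w = 1 := cs.length_eq_zero_iff.mp (Nat.le_antisymm hw (Nat.zero_le _))
      rw [hw1, G.N_one]
      exact Set.finite_empty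
  | succ n ih =>
      intro w hw
      by_cases hw1 : w = 1
      · rw [hw1, G.N_one]; exact Set.finite_empty
      · obtain ⟨i, hi⟩ := cs.exists_leftDescent_of_ne_one hw1
        have hcan : σ i * (σ i * w) = w := cs.simple_mul_simple_cancel_left i
        have hnd : ¬cs.IsLeftDescent (σ i * w) i :=
          cs.isLeftDescent_iff_not_isLeftDescent_mul.mp hi
        have hlen : ℓ (σ i * w) + 1 = ℓ w := cs.isLeftDescent_iff.mp hi
        rw [← hcan, G.N_simple_mul hnd]
        exact Set.Finite.insert _ (Set.Finite.image _ (ih (σ i * w) (by omega)))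

end GeomRep

/-- The right weak order on a Coxeter group. -/
def WeakLE {B : Type*} {W : Type*} [Group W] {M : CoxeterMatrix B}
    (cs : CoxeterSystem M W) (u w : W) : Prop :=
  cs.length u + cs.length (u⁻¹ * w) = cs.length w


namespace GeomRep
open CoxeterSystem Finset
variable {B : Type*} [Fintype B] {W : Type*} [Group W]
  {M : CoxeterMatrix B} {cs : CoxeterSystem M W}
  {V : Type*} [AddCommGroup V] [Module ℝ V] (G : GeomRep M cs V)
local prefix:100 "ℓ" => cs.length
local prefix:100 "σ" => cs.simple

lemma N_mono' : ∀ n : ℕ, ∀ u : W, ℓ u ≤ n → ∀ v : W, WeakLE cs u v → G.N u ⊆ G.N v := by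
  intro n
  induction n with
  | zero =>
      intro u hu v _
      have hu1 : u = 1 := cs.length_eq_zero_iff.mp (Nat.le_antisymm hu (Nat.zero_le _))
      rw [hu1, G.N_one]
      exact Set.empty_subset _
  | succ n ih =>
      intro u hu v huv
      by_cases hu1 : u = 1
      · rw [hu1, G.N_one]; exact Set.empty_subset _
      · obtain ⟨i, hi⟩ := cs.exists_leftDescent_of_ne_one hu1
        set u' := σ i * u with hu'def
        have hucan : σ i * u' = u := cs.simple_mul_simple_cancel_left i
        have hlu : ℓ u' + 1 = ℓ u := cs.isLeftDescent_iff.mp hi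
        have hquot : u⁻¹ * v = u'⁻¹ * (σ i * v) := by
          rw [hu'def, mul_inv_rev, cs.inv_simple, mul_assoc, ← mul_assoc (σ i),
            cs.simple_mul_simple_self, one_mul]
        have hlv : cs.IsLeftDescent v i := by
          have h1 : σ i * v = u' * (u⁻¹ * v) := by
            rw [hquot, ← mul_assoc, mul_inv_cancel, one_mul]
          have h2 : ℓ (σ i * v) ≤ ℓ u' + ℓ (u⁻¹ * v) := h1 ▸ cs.length_mul_le _ _
          have h3 : ℓ u + ℓ (u⁻¹ * v) = ℓ v := huv
          show ℓ (σ i * v) < ℓ v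
          omega
        set v' := σ i * v with hv'def
        have hvcan : σ i * v' = v := cs.simple_mul_simple_cancel_left i
        have hlv' : ℓ v' + 1 = ℓ v := cs.isLeftDescent_iff.mp hlv
        have huv' : WeakLE cs u' v' := by
          show ℓ u' + ℓ (u'⁻¹ * v') = ℓ v'
          have h3 : ℓ u + ℓ (u⁻¹ * v) = ℓ v := huv
          rw [hquot] at h3
          omega
        have hndu : ¬cs.IsLeftDescent u' i := by
          rw [hu'def]
          exact cs.isLeftDescent_iff_not_isLeftDescent_mul.mp hi
        have hndv : ¬cs.IsLeftDescent v' i := by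
          rw [hv'def]
          exact cs.isLeftDescent_iff_not_isLeftDescent_mul.mp hlv
        have hsub := ih u' (by omega) v' huv'
        rw [← hucan, ← hvcan, G.N_simple_mul hndu, G.N_simple_mul hndv]
        exact Set.insert_subset_insert (Set.image_mono hsub)

lemma N_mono {u v : W} (huv : WeakLE cs u v) : G.N u ⊆ G.N v :=
  G.N_mono' (ℓ u) u le_rfl v huv

lemma weakLE_of_N_subset' : ∀ n : ℕ, ∀ u : W, ℓ u ≤ n → ∀ v : W,
    G.N u ⊆ G.N v → WeakLE cs u v := by
  intro n
  induction n with
  | zero =>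
      intro u hu v _
      have hu1 : u = 1 := cs.length_eq_zero_iff.mp (Nat.le_antisymm hu (Nat.zero_le _))
      rw [hu1]
      show ℓ (1 : W) + ℓ ((1 : W)⁻¹ * v) = ℓ v
      simp
  | succ n ih =>
      intro u hu v hsub
      by_cases hu1 : u = 1
      · rw [hu1]
        show ℓ (1 : W) + ℓ ((1 : W)⁻¹ * v) = ℓ v
        simp
      · obtain ⟨i, hi⟩ := cs.exists_leftDescent_of_ne_one hu1
        set u' := σ i * u with hu'def
        have hucan : σ i * u' = u := cs.simple_mul_simple_cancel_left i
        have hlu : ℓ u' + 1 = ℓ u := cs.isLeftDescent_iff.mp hi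
        have hndu : ¬cs.IsLeftDescent u' i := by
          rw [hu'def]
          exact cs.isLeftDescent_iff_not_isLeftDescent_mul.mp hi
        have hNu : G.N u = insert (G.α i) (G.π (σ i) '' G.N u') := by
          rw [← hucan, G.N_simple_mul hndu]
        -- α i ∈ N v, hence i is a left descent of v
        have hαv : G.α i ∈ G.N v := hsub (hNu ▸ Set.mem_insert _ _)
        have hlv : cs.IsLeftDescent v i := by
          rw [G.mem_N_iff] at hαv
          obtain ⟨_, _, hnc⟩ := hαv
          have := G.isRightDescent_iff_neg.mpr hnc
          exact cs.isRightDescent_inv_iff.mp this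
        set v' := σ i * v with hv'def
        have hvcan : σ i * v' = v := cs.simple_mul_simple_cancel_left i
        have hlv' : ℓ v' + 1 = ℓ v := cs.isLeftDescent_iff.mp hlv
        have hndv : ¬cs.IsLeftDescent v' i := by
          rw [hv'def]
          exact cs.isLeftDescent_iff_not_isLeftDescent_mul.mp hlv
        have hNv : G.N v = insert (G.α i) (G.π (σ i) '' G.N v') := by
          rw [← hvcan, G.N_simple_mul hndv]
        -- N u' ⊆ N v'
        have hsub' : G.N u' ⊆ G.N v' := by
          intro γ hγ
          have h1 : G.π (σ i) γ ∈ G.N u := by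
            rw [hNu]
            exact Set.mem_insert_of_mem _ ⟨γ, hγ, rfl⟩
          have h2 := hsub h1
          rw [hNv, Set.mem_insert_iff] at h2
          rcases h2 with h2 | ⟨δ, hδ, hδeq⟩
          · exfalso
            have hγeq : γ = -G.α i := by
              have := congrArg (G.π (σ i)) h2
              rw [G.pi_simple_invol, G.pi_simple_self] at this
              exact this
            rw [G.mem_N_iff] at hγ
            obtain ⟨hΦ, hc, _⟩ := hγ
            rw [hγeq] at hc
            exact G.alpha_ne_zero i
              (G.eq_zero_of_mem_cone_of_neg_mem_cone (G.alpha_mem_cone i) hc)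
          · have : γ = δ := G.pi_injective (σ i) hδeq.symm
            rw [this]
            exact hδ
        have huv' : WeakLE cs u' v' := ih u' (by omega) v' hsub'
        show ℓ u + ℓ (u⁻¹ * v) = ℓ v
        have hquot : u⁻¹ * v = u'⁻¹ * v' := by
          rw [← hucan, ← hvcan, mul_inv_rev, cs.inv_simple, mul_assoc, ← mul_assoc (σ i),
            cs.simple_mul_simple_self, one_mul]
        have h3 : ℓ u' + ℓ (u'⁻¹ * v') = ℓ v' := huv'
        rw [hquot]
        omega

lemma weakLE_of_N_subset {u v : W} (h : G.N u ⊆ G.N v) : WeakLE cs u v :=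
  G.weakLE_of_N_subset' (ℓ u) u le_rfl v h

section InfiniteWord

variable (ω : ℕ → B)

lemma length_prefix (hred : ∀ n, cs.IsReduced (List.ofFn fun i : Fin n => ω i)) (n : ℕ) : ℓ (cs.wordProd (List.ofFn fun i : Fin n => ω i)) = n := by
  have := hred n
  unfold CoxeterSystem.IsReduced at this
  rw [this, List.length_ofFn]

lemma prefix_weakLE (hred : ∀ n, cs.IsReduced (List.ofFn fun i : Fin n => ω i)) {n m : ℕ} (hnm : n ≤ m) :
    WeakLE cs (cs.wordProd (List.ofFn fun i : Fin n => ω i))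
      (cs.wordProd (List.ofFn fun i : Fin m => ω i)) := by
  obtain ⟨k, rfl⟩ := Nat.exists_eq_add_of_le hnm
  have hsplit : (List.ofFn fun i : Fin (n + k) => ω i) =
      (List.ofFn fun i : Fin n => ω i) ++ (List.ofFn fun i : Fin k => ω (n + i)) := by
    rw [List.ofFn_add]
    rfl
  have hprod : cs.wordProd (List.ofFn fun i : Fin (n + k) => ω i) =
      cs.wordProd (List.ofFn fun i : Fin n => ω i) *
        cs.wordProd (List.ofFn fun i : Fin k => ω (n + i)) := by
    rw [hsplit, cs.wordProd_append]
  set u := cs.wordProd (List.ofFn fun i : Fin n => ω i) with hu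
  set t := cs.wordProd (List.ofFn fun i : Fin k => ω (n + i)) with htdef
  have hlu : ℓ u = n := length_prefix ω hred n
  have hlm : ℓ (u * t) = n + k := by rw [← hprod]; exact length_prefix ω hred (n + k)
  have hlt1 : ℓ t ≤ k := by
    have := cs.length_wordProd_le (List.ofFn fun i : Fin k => ω (n + i))
    rwa [List.length_ofFn] at this
  have hlt2 : ℓ (u * t) ≤ ℓ u + ℓ t := cs.length_mul_le u t
  rw [hprod]
  show ℓ u + ℓ (u⁻¹ * (u * t)) = ℓ (u * t)
  rw [← mul_assoc, inv_mul_cancel, one_mul]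
  omega

end InfiniteWord

end GeomRep

/-- `w ∈ W` is a prefix of the infinite reduced word `ω` iff
`N(w) ⊆ N(ω)`. -/
theorem stmt17 {B : Type*} [Fintype B] {W : Type*} [Group W]
    {M : CoxeterMatrix B} {cs : CoxeterSystem M W}
    {V : Type*} [AddCommGroup V] [Module ℝ V] (G : GeomRep M cs V)
    (ω : ℕ → B) (hred : ∀ n, cs.IsReduced (List.ofFn fun i : Fin n => ω i)) (w : W) :
    (∃ j : ℕ, WeakLE cs w (cs.wordProd (List.ofFn fun i : Fin j => ω i))) ↔
      G.N w ⊆ ⋃ n : ℕ, G.N (cs.wordProd (List.ofFn fun i : Fin n => ω i)) := by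
    classical
  constructor
  · rintro ⟨j, hj⟩
    intro v hv
    exact Set.mem_iUnion.mpr ⟨j, G.N_mono hj hv⟩
  · intro h
    have hfin := G.N_finite w
    have hex : ∀ v ∈ G.N w, ∃ n : ℕ,
        v ∈ G.N (cs.wordProd (List.ofFn fun i : Fin n => ω i)) := by
      intro v hv
      have := h hv
      rwa [Set.mem_iUnion] at this
    let f : V → ℕ := fun v =>
      if hv : ∃ n : ℕ, v ∈ G.N (cs.wordProd (List.ofFn fun i : Fin n => ω i)) then
        Nat.find hv else 0
    refine ⟨hfin.toFinset.sup f, G.weakLE_of_N_subset ?_⟩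
    intro v hv
    have hvex := hex v hv
    have hfind : v ∈ G.N (cs.wordProd (List.ofFn fun i : Fin (Nat.find hvex) => ω i)) :=
      Nat.find_spec hvex
    have hfv : f v = Nat.find hvex := dif_pos hvex
    have hle : Nat.find hvex ≤ hfin.toFinset.sup f := by
      rw [← hfv]
      exact Finset.le_sup (hfin.mem_toFinset.mpr hv)
    exact G.N_mono (GeomRep.prefix_weakLE ω hred hle) hfind
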